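/- (Unisolvence of quadratic Lagrange interpolation on a simplex) Let m ≥ 1 and let v_0, v_1, …, v_m ∈ ℝ^m be affinely independent points (the vertices of a nondegenerate m-simplex). Let N = {v_i : 0 ≤ i ≤ m} ∪ {(v_i + v_j)/2 : 0 ≤ i < j ≤ m} be the set consisting of the vertices together with the midpoints of all edges. Then for every function g : N → ℝ there exists a unique polynomial p in m variables of total degree at most 2 such that p(n) = g(n) for all n ∈ N. -/

import Mathlib

open Set

noncomputable section

namespace QLUaux

open MvPolynomial Finset

variable {m : ℕ}

/-- The polynomial associated to an affine functional on `ℝ^m`. -/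
def polyOfAffine (f : (Fin m → ℝ) →ᵃ[ℝ] ℝ) : MvPolynomial (Fin m) ℝ :=
  C (f 0) + ∑ j : Fin m, C (f.linear fun l => if j = l then 1 else 0) * X j

lemma eval_polyOfAffine (f : (Fin m → ℝ) →ᵃ[ℝ] ℝ) (x : Fin m → ℝ) :
    eval x (polyOfAffine f) = f x := by
  have h1 : f x = f.linear x + f 0 := by
    have := congrFun (AffineMap.decomp f) x
    simpa using this
  simp only [polyOfAffine, map_add, map_sum, map_mul, eval_C, eval_X]
  rw [h1, LinearMap.pi_apply_eq_sum_univ f.linear x, add_comm]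
  congr 1
  exact Finset.sum_congr rfl fun j _ => by rw [smul_eq_mul, mul_comm]

lemma totalDegree_polyOfAffine (f : (Fin m → ℝ) →ᵃ[ℝ] ℝ) :
    (polyOfAffine f).totalDegree ≤ 1 := by
  refine (totalDegree_add _ _).trans (max_le (by simp) ?_)
  refine (totalDegree_finset_sum _ _).trans (Finset.sup_le fun j _ => ?_)
  refine (totalDegree_mul _ _).trans ?_
  simp [totalDegree_X]

/-- classification of exponents of total degree at most 2 -/
lemma finsupp_classify (d : Fin m →₀ ℕ) (hd : (d.sum fun _ e => e) ≤ 2) :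
    d = 0 ∨ (∃ k, d = Finsupp.single k 1) ∨
      ∃ k l, d = Finsupp.single k 1 + Finsupp.single l 1 := by
  have hs : ∀ (f : Fin m →₀ ℕ), (f.sum fun _ e => e) = ∑ i ∈ f.support, f i := fun f => rfl
  induction d using Finsupp.induction with
  | zero => exact Or.inl rfl
  | single_add a n f ha hn ih =>
    rw [Finsupp.sum_add_index' (fun _ => rfl) (fun _ _ _ => rfl),
      Finsupp.sum_single_index rfl] at hd
    have hfs : (f.sum fun _ e => e) ≤ 2 := by omega
    have hn2 : n ≤ 2 := by omega
    interval_cases n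
    · omega
    · rcases ih hfs with h0 | ⟨k, hk⟩ | ⟨k, l, hkl⟩
      · exact Or.inr (Or.inl ⟨a, by rw [h0, add_zero]⟩)
      · exact Or.inr (Or.inr ⟨a, k, by rw [hk]⟩)
      · exfalso
        rw [hkl, Finsupp.sum_add_index' (fun _ => rfl) (fun _ _ _ => rfl),
          Finsupp.sum_single_index rfl, Finsupp.sum_single_index rfl] at hd
        omega
    · have hf0 : (f.sum fun _ e => e) = 0 := by omega
      have hfz : f = 0 := by
        ext i
        by_cases hi : i ∈ f.support
        · have := Finset.sum_eq_zero_iff.mp ((hs f) ▸ hf0) i hi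
          simpa using this
        · simpa using Finsupp.notMem_support_iff.mp hi
      refine Or.inr (Or.inr ⟨a, a, ?_⟩)
      rw [hfz, add_zero, ← Finsupp.single_add]

variable (b : AffineBasis (Fin (m + 1)) ℝ (Fin m → ℝ))

/-- barycentric coordinates as polynomials -/
def L (i : Fin (m + 1)) : MvPolynomial (Fin m) ℝ := polyOfAffine (b.coord i)

lemma eval_L (i : Fin (m + 1)) (x : Fin m → ℝ) : eval x (L b i) = b.coord i x :=
  eval_polyOfAffine _ _

lemma deg_L (i : Fin (m + 1)) : (L b i).totalDegree ≤ 1 := totalDegree_polyOfAffine _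

lemma sum_L : ∑ i, L b i = 1 := by
  apply MvPolynomial.funext
  intro x
  rw [map_sum]
  simp only [eval_L, map_one]
  exact b.sum_coord_apply_eq_one x

lemma sum_CL (k : Fin m) : ∑ i, C (b i k) * L b i = X k := by
  apply MvPolynomial.funext
  intro x
  rw [map_sum]
  simp only [map_mul, eval_C, eval_L, eval_X]
  have h := congrFun (b.linear_combination_coord_eq_self x) k
  rw [Finset.sum_apply] at h
  simp only [Pi.smul_apply, smul_eq_mul] at h
  rw [← h]
  exact Finset.sum_congr rfl fun i _ => mul_comm _ _

lemma eval_L_vertex (i k : Fin (m + 1)) :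
    eval (b k) (L b i) = if i = k then 1 else 0 := by
  rw [eval_L]; exact b.coord_apply i k

lemma eval_L_mid (i a c : Fin (m + 1)) :
    eval (midpoint ℝ (b a) (b c)) (L b i) =
      ((if i = a then (1 : ℝ) else 0) + (if i = c then 1 else 0)) / 2 := by
  rw [eval_L, AffineMap.map_midpoint, midpoint_eq_smul_add, smul_eq_mul, invOf_eq_inv,
    b.coord_apply, b.coord_apply]
  ring

/-- vertex Lagrange basis polynomial -/
def phi (i : Fin (m + 1)) : MvPolynomial (Fin m) ℝ := L b i * (C 2 * L b i - C 1)

/-- edge Lagrange basis polynomial -/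
def psi (i j : Fin (m + 1)) : MvPolynomial (Fin m) ℝ := C 4 * (L b i * L b j)

/-- the indexed family of basis polynomials -/
def Fb : Fin (m + 1) × Fin (m + 1) → MvPolynomial (Fin m) ℝ := fun ij =>
  if ij.1 = ij.2 then phi b ij.1 else if ij.1 < ij.2 then psi b ij.1 ij.2 else 0

lemma deg_phi (i : Fin (m + 1)) : (phi b i).totalDegree ≤ 2 := by
  refine (totalDegree_mul _ _).trans ?_
  have h2 : (C 2 * L b i - C 1 : MvPolynomial (Fin m) ℝ).totalDegree ≤ 1 := by
    refine (totalDegree_sub _ _).trans (max_le ?_ (by simp))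
    refine (totalDegree_mul _ _).trans ?_
    simpa using deg_L b i
  have := deg_L b i
  omega

lemma deg_psi (i j : Fin (m + 1)) : (psi b i j).totalDegree ≤ 2 := by
  refine (totalDegree_mul _ _).trans ?_
  have h := (totalDegree_mul (L b i) (L b j)).trans
    (add_le_add (deg_L b i) (deg_L b j))
  simpa using h

lemma deg_Fb (ij : Fin (m + 1) × Fin (m + 1)) : (Fb b ij).totalDegree ≤ 2 := by
  unfold Fb
  split_ifs
  · exact deg_phi b _
  · exact deg_psi b _ _
  · simp

lemma Fb_diag (i : Fin (m + 1)) : Fb b (i, i) = phi b i := if_pos rfl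

lemma Fb_lt {i j : Fin (m + 1)} (h : i < j) : Fb b (i, j) = psi b i j := by
  unfold Fb; rw [if_neg (ne_of_lt h), if_pos h]

lemma Fb_gt {i j : Fin (m + 1)} (h : j < i) : Fb b (i, j) = 0 := by
  unfold Fb; rw [if_neg (ne_of_gt h), if_neg (asymm h)]

lemma eval_Fb_vertex (k : Fin (m + 1)) (ij : Fin (m + 1) × Fin (m + 1)) :
    eval (b k) (Fb b ij) = if ij = (k, k) then 1 else 0 := by
  obtain ⟨i, j⟩ := ij
  rcases lt_trichotomy i j with hlt | rfl | hgt
  · have hne : (i, j) ≠ (k, k) := by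
      rintro h
      rw [Prod.mk.injEq] at h
      exact absurd (h.1.trans h.2.symm) (ne_of_lt hlt)
    rw [Fb_lt b hlt, if_neg hne]
    simp only [psi, map_mul, eval_C, eval_L_vertex]
    by_cases hik : i = k
    · have hjk : j ≠ k := by
        rintro rfl
        exact absurd hik (ne_of_lt hlt)
      rw [if_neg hjk]; ring
    · rw [if_neg hik]; ring
  · rw [Fb_diag]
    simp only [phi, map_mul, map_sub, eval_C, map_one, eval_L_vertex, Prod.mk.injEq, and_self]
    by_cases hik : i = k
    · norm_num [hik]
    · norm_num [hik]
  · have hne : (i, j) ≠ (k, k) := by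
      rintro h
      rw [Prod.mk.injEq] at h
      exact absurd (h.1.trans h.2.symm) (ne_of_gt hgt)
    rw [Fb_gt b hgt, if_neg hne]
    simp

lemma eval_Fb_mid (a c : Fin (m + 1)) (hac : a < c) (ij : Fin (m + 1) × Fin (m + 1)) :
    eval (midpoint ℝ (b a) (b c)) (Fb b ij) = if ij = (a, c) then 1 else 0 := by
  obtain ⟨i, j⟩ := ij
  have hac' : a ≠ c := ne_of_lt hac
  rcases lt_trichotomy i j with hlt | rfl | hgt
  · rw [Fb_lt b hlt]
    simp only [psi, map_mul, eval_C, eval_L_mid]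
    by_cases hcase : (i, j) = (a, c)
    · rw [if_pos hcase]
      rw [Prod.mk.injEq] at hcase
      obtain ⟨rfl, rfl⟩ := hcase
      rw [if_pos rfl, if_neg hac', if_neg (ne_of_gt hac), if_pos rfl]
      norm_num
    · rw [if_neg hcase]
      rw [Prod.mk.injEq, not_and] at hcase
      by_cases hia : i = a
      · have hjc : j ≠ c := hcase hia
        have hja : j ≠ a := by
          rintro rfl
          exact absurd hia (ne_of_lt hlt)
        rw [if_neg hja, if_neg hjc]; ring
      · by_cases hic : i = c
        · have hja : j ≠ a := by
            rintro rfl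
            rw [hic] at hlt
            exact absurd (hac.trans hlt) (lt_irrefl _)
          have hjc : j ≠ c := by
            rintro rfl
            exact absurd hic (ne_of_lt hlt)
          rw [if_neg hja, if_neg hjc]; ring
        · rw [if_neg hia, if_neg hic]; ring
  · have hne : (i, i) ≠ (a, c) := by
      rintro h
      rw [Prod.mk.injEq] at h
      exact absurd (h.1.symm.trans h.2) hac'
    rw [Fb_diag, if_neg hne]
    simp only [phi, map_mul, map_sub, eval_C, map_one, eval_L_mid]
    by_cases hia : i = a
    · subst hia
      rw [if_pos rfl, if_neg hac']
      norm_num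
    · by_cases hic : i = c
      · subst hic
        rw [if_neg hia, if_pos rfl]
        norm_num
      · rw [if_neg hia, if_neg hic]
        norm_num
  · have hne : (i, j) ≠ (a, c) := by
      rintro h
      rw [Prod.mk.injEq] at h
      rw [h.1, h.2] at hgt
      exact absurd (hac.trans hgt) (lt_irrefl _)
    rw [Fb_gt b hgt, if_neg hne]
    simp


/-- the span of the Lagrange basis polynomials -/
def S : Submodule ℝ (MvPolynomial (Fin m) ℝ) := Submodule.span ℝ (Set.range (Fb b))

lemma LL_mem_of_lt {i j : Fin (m + 1)} (h : i < j) : L b i * L b j ∈ S b := by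
  have h4 : L b i * L b j = (4 : ℝ)⁻¹ • psi b i j := by
    rw [psi, smul_eq_C_mul, ← mul_assoc, ← C_mul]
    norm_num
  rw [h4, ← Fb_lt b h]
  exact Submodule.smul_mem _ _ (Submodule.subset_span ⟨(i, j), rfl⟩)

lemma LL_mem_of_ne {i j : Fin (m + 1)} (h : i ≠ j) : L b i * L b j ∈ S b := by
  rcases lt_or_gt_of_ne h with hlt | hgt
  · exact LL_mem_of_lt b hlt
  · rw [mul_comm]; exact LL_mem_of_lt b hgt

lemma LL_mem (i j : Fin (m + 1)) : L b i * L b j ∈ S b := by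
  by_cases h : i = j
  · subst h
    have h2 : L b i * L b i + ∑ j ∈ Finset.univ.erase i, L b i * L b j = L b i := by
      have h := Finset.add_sum_erase Finset.univ (fun j => L b i * L b j) (Finset.mem_univ i)
      rw [h, ← Finset.mul_sum, sum_L, mul_one]
    have hC2 : (C (2 : ℝ) : MvPolynomial (Fin m) ℝ) = 2 := map_ofNat _ 2
    have key : L b i * L b i = phi b i + ∑ j ∈ Finset.univ.erase i, L b i * L b j := by
      rw [phi, hC2, C_1]
      linear_combination -h2
    rw [key, ← Fb_diag]
    refine Submodule.add_mem _ (Submodule.subset_span ⟨(i, i), rfl⟩)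
      (Submodule.sum_mem _ fun j hj => ?_)
    exact LL_mem_of_ne b (Finset.ne_of_mem_erase hj).symm
  · exact LL_mem_of_ne b h

lemma one_mem : (1 : MvPolynomial (Fin m) ℝ) ∈ S b := by
  have h1 : (1 : MvPolynomial (Fin m) ℝ) = (∑ i, L b i) * (∑ j, L b j) := by
    rw [sum_L, one_mul]
  rw [h1, Finset.sum_mul_sum]
  exact Submodule.sum_mem _ fun i _ => Submodule.sum_mem _ fun j _ => LL_mem b i j

lemma X_mem (k : Fin m) : (X k : MvPolynomial (Fin m) ℝ) ∈ S b := by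
  have h1 : (X k : MvPolynomial (Fin m) ℝ) = (∑ i, C (b i k) * L b i) * (∑ j, L b j) := by
    rw [sum_CL, sum_L, mul_one]
  rw [h1, Finset.sum_mul_sum]
  refine Submodule.sum_mem _ fun i _ => Submodule.sum_mem _ fun j _ => ?_
  rw [mul_assoc, ← smul_eq_C_mul]
  exact Submodule.smul_mem _ _ (LL_mem b i j)

lemma XX_mem (k l : Fin m) : (X k * X l : MvPolynomial (Fin m) ℝ) ∈ S b := by
  have h1 : (X k * X l : MvPolynomial (Fin m) ℝ)
      = (∑ i, C (b i k) * L b i) * (∑ j, C (b j l) * L b j) := by rw [sum_CL, sum_CL]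
  rw [h1, Finset.sum_mul_sum]
  refine Submodule.sum_mem _ fun i _ => Submodule.sum_mem _ fun j _ => ?_
  have h2 : C (b i k) * L b i * (C (b j l) * L b j)
      = (b i k * b j l) • (L b i * L b j) := by
    rw [smul_eq_C_mul, C_mul]; ring
  rw [h2]
  exact Submodule.smul_mem _ _ (LL_mem b i j)

lemma mem_S_of_deg_le_two (q : MvPolynomial (Fin m) ℝ) (hq : q.totalDegree ≤ 2) :
    q ∈ S b := by
  rw [← support_sum_monomial_coeff q]
  refine Submodule.sum_mem _ fun d hd => ?_
  have hdeg : (d.sum fun _ e => e) ≤ 2 := (le_totalDegree hd).trans hq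
  have hmono : (monomial d (1 : ℝ) : MvPolynomial (Fin m) ℝ) ∈ S b := by
    rcases finsupp_classify d hdeg with rfl | ⟨k, rfl⟩ | ⟨k, l, rfl⟩
    · rw [monomial_zero', C_1]; exact one_mem b
    · exact X_mem b k
    · have h2 : (monomial (Finsupp.single k 1 + Finsupp.single l 1) (1 : ℝ))
          = monomial (Finsupp.single k 1) (1 : ℝ) * monomial (Finsupp.single l 1) (1 : ℝ) := by
        rw [monomial_mul, one_mul]
      rw [h2]
      exact XX_mem b k l
  have h3 : (monomial d (coeff d q) : MvPolynomial (Fin m) ℝ)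
      = (coeff d q) • monomial d 1 := by
    rw [smul_monomial, smul_eq_mul, mul_one]
  rw [h3]
  exact Submodule.smul_mem _ _ hmono

lemma eq_zero_of_vanish (q : MvPolynomial (Fin m) ℝ) (hdeg : q.totalDegree ≤ 2)
    (hvert : ∀ k, eval (b k) q = 0)
    (hmid : ∀ a c, a < c → eval (midpoint ℝ (b a) (b c)) q = 0) : q = 0 := by
  obtain ⟨co, hco⟩ := Submodule.mem_span_range_iff_exists_fun ℝ |>.mp (mem_S_of_deg_le_two b q hdeg)
  have key : ∀ (x : Fin m → ℝ) (t : Fin (m + 1) × Fin (m + 1)),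
      (∀ ij, eval x (Fb b ij) = if ij = t then 1 else 0) → eval x q = co t := by
    intro x t h
    rw [← hco, map_sum]
    rw [Finset.sum_congr rfl (fun ij _ => show eval x (co ij • Fb b ij)
      = if ij = t then co ij else 0 by
        rw [smul_eq_C_mul, map_mul, eval_C, h ij]
        split_ifs with hh <;> simp)]
    rw [Finset.sum_ite_eq' Finset.univ t co, if_pos (Finset.mem_univ t)]
  have hdiag : ∀ k, co (k, k) = 0 := fun k => by
    have h := key (b k) (k, k) (eval_Fb_vertex b k)
    rw [hvert k] at h
    exact h.symm
  have hoff : ∀ a c, a < c → co (a, c) = 0 := fun a c hac => by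
    have h := key (midpoint ℝ (b a) (b c)) (a, c) (eval_Fb_mid b a c hac)
    rw [hmid a c hac] at h
    exact h.symm
  rw [← hco]
  refine Finset.sum_eq_zero fun ij _ => ?_
  obtain ⟨i, j⟩ := ij
  rcases lt_trichotomy i j with hlt | rfl | hgt
  · rw [hoff i j hlt, zero_smul]
  · rw [hdiag i, zero_smul]
  · rw [Fb_gt b hgt, smul_zero]

end QLUaux

open MvPolynomial in
/-- **Unisolvence of quadratic Lagrange interpolation on a simplex**: given affinely
independent points `v 0, …, v m` in `ℝ^m` (`m ≥ 1`), and the node set `N` consisting of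
the vertices together with the midpoints of all edges, every real-valued function on `N`
is interpolated by a unique polynomial in `m` variables of total degree at most `2`. -/
theorem quadratic_lagrange_unisolvence {m : ℕ} (hm : 1 ≤ m)
    (v : Fin (m + 1) → (Fin m → ℝ)) (hv : AffineIndependent ℝ v)
    (N : Set (Fin m → ℝ))
    (hN : N = Set.range v ∪
      {x | ∃ i j : Fin (m + 1), i < j ∧ x = midpoint ℝ (v i) (v j)}) :
    ∀ g : N → ℝ, ∃! p : MvPolynomial (Fin m) ℝ,
      p.totalDegree ≤ 2 ∧ ∀ n : N, MvPolynomial.eval (n : Fin m → ℝ) p = g n := by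
  intro g
  classical
  have hcard : Fintype.card (Fin (m + 1)) = Module.finrank ℝ (Fin m → ℝ) + 1 := by
    rw [Fintype.card_fin, Module.finrank_fin_fun]
  have htot : affineSpan ℝ (Set.range v) = ⊤ :=
    hv.affineSpan_eq_top_iff_card_eq_finrank_add_one.mpr hcard
  let b : AffineBasis (Fin (m + 1)) ℝ (Fin m → ℝ) := ⟨v, hv, htot⟩
  have hb : ∀ i, b i = v i := fun _ => rfl
  set g' : (Fin m → ℝ) → ℝ := fun x => if h : x ∈ N then g ⟨x, h⟩ else 0 with hg'
  have hgN : ∀ n : N, g' (n : Fin m → ℝ) = g n := by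
    intro n
    simp only [hg', dif_pos n.2]
  have hvN : ∀ i, v i ∈ N := fun i => by
    rw [hN]; exact Or.inl ⟨i, rfl⟩
  have hmN : ∀ i j : Fin (m + 1), i < j → midpoint ℝ (v i) (v j) ∈ N := fun i j hij => by
    rw [hN]; exact Or.inr ⟨i, j, hij, rfl⟩
  set w : Fin (m + 1) × Fin (m + 1) → ℝ := fun ij =>
    if ij.1 = ij.2 then g' (v ij.1) else g' (midpoint ℝ (v ij.1) (v ij.2)) with hw
  set p : MvPolynomial (Fin m) ℝ := ∑ ij, C (w ij) * QLUaux.Fb b ij with hp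
  have hdeg : p.totalDegree ≤ 2 := by
    rw [hp]
    refine (totalDegree_finset_sum _ _).trans (Finset.sup_le fun ij _ => ?_)
    refine (totalDegree_mul _ _).trans ?_
    simpa using QLUaux.deg_Fb b ij
  have hkey : ∀ (x : Fin m → ℝ) (t : Fin (m + 1) × Fin (m + 1)),
      (∀ ij, eval x (QLUaux.Fb b ij) = if ij = t then 1 else 0) → eval x p = w t := by
    intro x t h
    rw [hp, map_sum]
    rw [Finset.sum_congr rfl (fun ij _ => show eval x (C (w ij) * QLUaux.Fb b ij)
      = if ij = t then w ij else 0 by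
        rw [map_mul, eval_C, h ij]
        split_ifs with hh <;> simp)]
    rw [Finset.sum_ite_eq' Finset.univ t w, if_pos (Finset.mem_univ t)]
  have hint : ∀ n : N, eval (n : Fin m → ℝ) p = g n := by
    intro n
    have hn : (n : Fin m → ℝ) ∈ Set.range v ∪
        {x | ∃ i j : Fin (m + 1), i < j ∧ x = midpoint ℝ (v i) (v j)} := by
      rw [← hN]; exact n.2
    rcases hn with ⟨i, hi⟩ | ⟨i, j, hij, hx⟩
    · have h1 : eval (v i) p = w (i, i) := hkey (v i) (i, i) (QLUaux.eval_Fb_vertex b i)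
      have h2 : w (i, i) = g' (v i) := if_pos rfl
      rw [← hi, h1, h2, hi]
      exact hgN n
    · have h1 : eval (midpoint ℝ (v i) (v j)) p = w (i, j) :=
        hkey _ (i, j) (QLUaux.eval_Fb_mid b i j hij)
      have h2 : w (i, j) = g' (midpoint ℝ (v i) (v j)) := if_neg (ne_of_lt hij)
      rw [hx, h1, h2, ← hx]
      exact hgN n
  refine ⟨p, ⟨hdeg, hint⟩, fun y hy => ?_⟩
  obtain ⟨hy1, hy2⟩ := hy
  have hvanish_vert : ∀ k, eval (b k) (y - p) = 0 := by
    intro k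
    rw [map_sub, hb k]
    have h1 := hy2 ⟨v k, hvN k⟩
    have h2 := hint ⟨v k, hvN k⟩
    rw [h1, h2, sub_self]
  have hvanish_mid : ∀ a c, a < c → eval (midpoint ℝ (b a) (b c)) (y - p) = 0 := by
    intro a c hac
    rw [map_sub, hb a, hb c]
    have h1 := hy2 ⟨midpoint ℝ (v a) (v c), hmN a c hac⟩
    have h2 := hint ⟨midpoint ℝ (v a) (v c), hmN a c hac⟩
    rw [h1, h2, sub_self]
  have hz : y - p = 0 := QLUaux.eq_zero_of_vanish b (y - p)
    ((totalDegree_sub _ _).trans (max_le hy1 hdeg)) hvanish_vert hvanish_mid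
  exact sub_eq_zero.mp hz
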